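/- Let λ > 0 and suppose β : ℝ → ℝ takes positive values, is differentiable at n = 1, and satisfies the implicit equation λ^{2n} ∑_{k=1}^∞ (k+1)^{3−n} e^{−β(n)√(k(k+2))} = 1 for all n in a neighborhood of 1. Then β(1) − β′(1) = β(1) + (λ^{−2} log(λ^{−2}) + ∑_{k=1}^∞ (k+1)² log(k+1) e^{−β(1)√(k(k+2))}) / (∑_{k=1}^∞ (k+1)² √(k(k+2)) e^{−β(1)√(k(k+2))}). -/

import Mathlib

/-- The LQG area eigenvalue `E_k = √(k(k+2))` for spin `k/2`. -/
noncomputable def Ek (k : ℕ+) : ℝ :=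
  Real.sqrt (((k : ℕ) : ℝ) * (((k : ℕ) : ℝ) + 2))


open Real Filter

lemma Ek_nonneg (k : ℕ+) : 0 ≤ Ek k := Real.sqrt_nonneg _

lemma le_Ek (k : ℕ+) : ((k:ℕ):ℝ) ≤ Ek k := by
  have hk : (0:ℝ) ≤ ((k:ℕ):ℝ) := Nat.cast_nonneg _
  have h : ((k:ℕ):ℝ) = Real.sqrt (((k:ℕ):ℝ)^2) := (Real.sqrt_sq hk).symm
  rw [h, Ek]
  apply Real.sqrt_le_sqrt; nlinarith

lemma Ek_le (k : ℕ+) : Ek k ≤ ((k:ℕ):ℝ) + 2 := by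
  have hk : (0:ℝ) ≤ ((k:ℕ):ℝ) := Nat.cast_nonneg _
  calc Ek k ≤ Real.sqrt ((((k:ℕ):ℝ)+2)^2) := Real.sqrt_le_sqrt (by nlinarith)
    _ = ((k:ℕ):ℝ)+2 := Real.sqrt_sq (by positivity)

lemma Ek_pos (k : ℕ+) : 0 < Ek k := by
  have hk : (1:ℝ) ≤ ((k:ℕ):ℝ) := by exact_mod_cast k.one_le
  apply Real.sqrt_pos.mpr; nlinarith

noncomputable def fF (k : ℕ+) (p : ℝ × ℝ) : ℝ :=
  (((k:ℕ):ℝ)+1) ^ (3 - p.1) * Real.exp (-p.2 * Ek k)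
lemma summable_aux {c : ℝ} (hc : 0 < c) :
    Summable (fun k : ℕ+ => (((k:ℕ):ℝ)+1)^4 * Real.exp (-(c * (k:ℕ)))) := by
  set r : ℝ := Real.exp (-c) with hr
  have hr0 : 0 < r := Real.exp_pos _
  have hr1 : ‖r‖ < 1 := by
    rw [Real.norm_eq_abs, abs_of_pos hr0]
    exact Real.exp_lt_one_iff.mpr (by linarith)
  have h0 : Summable (fun n : ℕ => (n:ℝ)^4 * r^n) :=
    summable_pow_mul_geometric_of_norm_lt_one 4 hr1
  have h1 : Summable (fun n : ℕ => ((n+1:ℕ):ℝ)^4 * r^(n+1)) :=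
    (summable_nat_add_iff 1).mpr h0
  have h2 : Summable (fun n : ℕ => ((n:ℝ)+1)^4 * r^n) := by
    have h := h1.mul_right r⁻¹
    refine h.congr fun n => ?_
    have : r ^ (n+1) * r⁻¹ = r ^ n := by
      rw [pow_succ, mul_assoc, mul_inv_cancel₀ (ne_of_gt hr0), mul_one]
    push_cast
    rw [mul_assoc, this]
  have h3 : Summable (fun n : ℕ => ((n:ℝ)+1)^4 * Real.exp (-(c * n))) := by
    refine h2.congr fun n => ?_
    have h4 : (n:ℝ) * (-c) = -(c*n) := by ring
    rw [hr, ← Real.exp_nat_mul, h4]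
  exact h3.comp_injective (fun a b h => PNat.coe_injective h)
noncomputable def fF' (k : ℕ+) (p : ℝ × ℝ) : ℝ × ℝ →L[ℝ] ℝ :=
  (-(Real.log (((k:ℕ):ℝ)+1)) * fF k p) • ContinuousLinearMap.fst ℝ ℝ ℝ +
  (-(Ek k) * fF k p) • ContinuousLinearMap.snd ℝ ℝ ℝ

lemma fF'_apply (k : ℕ+) (p : ℝ × ℝ) (v : ℝ × ℝ) :
    fF' k p v = -(Real.log (((k:ℕ):ℝ)+1)) * fF k p * v.1 + -(Ek k) * fF k p * v.2 := by
  simp [fF', smul_eq_mul]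

lemma fF_pos (k : ℕ+) (p : ℝ × ℝ) : 0 < fF k p := by
  apply mul_pos (Real.rpow_pos_of_pos (by positivity) _) (Real.exp_pos _)

lemma hasFDerivAt_fF (k : ℕ+) (p : ℝ × ℝ) : HasFDerivAt (fF k) (fF' k p) p := by
  have hb : (0:ℝ) < ((k:ℕ):ℝ)+1 := by positivity
  have h1 : HasFDerivAt (fun q : ℝ×ℝ => 3 - q.1)
      ((0 : ℝ×ℝ →L[ℝ] ℝ) - ContinuousLinearMap.fst ℝ ℝ ℝ) p :=
    (hasFDerivAt_const (3:ℝ) p).sub hasFDerivAt_fst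
  have hA := h1.const_rpow hb
  have h2 : HasFDerivAt (fun q : ℝ×ℝ => -q.2 * Ek k)
      (-(Ek k • ContinuousLinearMap.snd ℝ ℝ ℝ)) p := by
    simpa [neg_mul] using
      (hasFDerivAt_snd (𝕜 := ℝ) (E := ℝ) (F := ℝ) (p := p)).neg.mul_const (Ek k)
  have hB := h2.exp
  have h3 := hA.mul hB
  refine h3.congr_fderiv ?_
  apply ContinuousLinearMap.ext
  intro v
  simp only [fF'_apply, ContinuousLinearMap.add_apply, ContinuousLinearMap.smul_apply,
    ContinuousLinearMap.coe_sub', Pi.sub_apply, ContinuousLinearMap.zero_apply,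
    ContinuousLinearMap.coe_fst', ContinuousLinearMap.coe_snd',
    ContinuousLinearMap.smulRight_apply, ContinuousLinearMap.neg_apply, smul_eq_mul, fF]
  ring

lemma fF'_norm_le (k : ℕ+) (p : ℝ × ℝ) :
    ‖fF' k p‖ ≤ (Real.log (((k:ℕ):ℝ)+1) + Ek k) * fF k p := by
  have hlog : 0 ≤ Real.log (((k:ℕ):ℝ)+1) :=
    Real.log_nonneg (by
      have : (0:ℝ) ≤ ((k:ℕ):ℝ) := Nat.cast_nonneg _
      linarith)
  have hf := (fF_pos k p).le
  apply ContinuousLinearMap.opNorm_le_bound _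
    (mul_nonneg (add_nonneg hlog (Ek_nonneg k)) hf)
  intro v
  rw [fF'_apply]
  calc |(-(Real.log (((k:ℕ):ℝ)+1)) * fF k p * v.1 + -(Ek k) * fF k p * v.2)|
      ≤ |(-(Real.log (((k:ℕ):ℝ)+1)) * fF k p * v.1)| + |(-(Ek k) * fF k p * v.2)| :=
        abs_add_le _ _
    _ ≤ Real.log (((k:ℕ):ℝ)+1) * fF k p * ‖v‖ + Ek k * fF k p * ‖v‖ := by
        rw [abs_mul, abs_mul, abs_mul, abs_mul, abs_neg, abs_neg,
          abs_of_nonneg hlog, abs_of_nonneg (Ek_nonneg k), abs_of_nonneg hf]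
        have e1 : |v.1| ≤ ‖v‖ := norm_fst_le v
        have e2 : |v.2| ≤ ‖v‖ := norm_snd_le v
        have c1 : 0 ≤ Real.log (((k:ℕ):ℝ)+1) * fF k p := mul_nonneg hlog hf
        have c2 : 0 ≤ Ek k * fF k p := mul_nonneg (Ek_nonneg k) hf
        exact add_le_add (mul_le_mul_of_nonneg_left e1 c1)
          (mul_le_mul_of_nonneg_left e2 c2)
    _ = (Real.log (((k:ℕ):ℝ)+1) + Ek k) * fF k p * ‖v‖ := by ring

lemma log_add_Ek_le (k : ℕ+) : Real.log (((k:ℕ):ℝ)+1) + Ek k ≤ 3 * (((k:ℕ):ℝ)+1) := by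
  have hk : (0:ℝ) ≤ ((k:ℕ):ℝ) := Nat.cast_nonneg _
  have h1 : Real.log (((k:ℕ):ℝ)+1) ≤ ((k:ℕ):ℝ) := by
    have := Real.log_le_sub_one_of_pos (show (0:ℝ) < ((k:ℕ):ℝ)+1 by positivity)
    linarith
  have h2 := Ek_le k
  linarith

lemma fF_bound {c : ℝ} (hc : 0 < c) (k : ℕ+) (p : ℝ × ℝ)
    (hp1 : p.1 ∈ Set.Ioo (0:ℝ) 2) (hp2 : c < p.2) :
    fF k p ≤ (((k:ℕ):ℝ)+1)^(3:ℕ) * Real.exp (-(c * (k:ℕ))) := by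
  have hk : (0:ℝ) ≤ ((k:ℕ):ℝ) := Nat.cast_nonneg _
  have h1 : (((k:ℕ):ℝ)+1) ^ (3 - p.1) ≤ (((k:ℕ):ℝ)+1)^(3:ℕ) := by
    rw [← Real.rpow_natCast (((k:ℕ):ℝ)+1) 3]
    apply Real.rpow_le_rpow_of_exponent_le (by linarith)
    push_cast
    linarith [hp1.1]
  have h2 : Real.exp (-p.2 * Ek k) ≤ Real.exp (-(c * (k:ℕ))) := by
    apply Real.exp_le_exp.mpr
    have h3 := le_Ek k
    have h4 := Ek_nonneg k
    nlinarith
  calc fF k p ≤ (((k:ℕ):ℝ)+1)^(3:ℕ) * Real.exp (-p.2 * Ek k) := by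
        apply mul_le_mul_of_nonneg_right h1 (Real.exp_pos _).le
    _ ≤ (((k:ℕ):ℝ)+1)^(3:ℕ) * Real.exp (-(c * (k:ℕ))) := by
        apply mul_le_mul_of_nonneg_left h2 (by positivity)

lemma fF'_bound {c : ℝ} (hc : 0 < c) (k : ℕ+) (p : ℝ × ℝ)
    (hp1 : p.1 ∈ Set.Ioo (0:ℝ) 2) (hp2 : c < p.2) :
    ‖fF' k p‖ ≤ 3 * ((((k:ℕ):ℝ)+1)^4 * Real.exp (-(c * (k:ℕ)))) := by
  have hk : (0:ℝ) ≤ ((k:ℕ):ℝ) := Nat.cast_nonneg _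
  have hlog : 0 ≤ Real.log (((k:ℕ):ℝ)+1) := Real.log_nonneg (by linarith)
  refine (fF'_norm_le k p).trans ?_
  calc (Real.log (((k:ℕ):ℝ)+1) + Ek k) * fF k p
      ≤ (3 * (((k:ℕ):ℝ)+1)) * ((((k:ℕ):ℝ)+1)^(3:ℕ) * Real.exp (-(c * (k:ℕ)))) := by
        apply mul_le_mul (log_add_Ek_le k) (fF_bound hc k p hp1 hp2) (fF_pos k p).le
          (by positivity)
    _ = 3 * ((((k:ℕ):ℝ)+1)^4 * Real.exp (-(c * (k:ℕ)))) := by ring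

/-- **The area-law coefficient `β = β(1) - ∂ₙβ(1)`.**
If `β : ℝ → ℝ` is positive, differentiable at `n = 1`, and satisfies
`λ^{2n} ∑_{k≥1} (k+1)^{3-n} e^{-β(n) E_k} = 1` near `n = 1`, then
`β(1) - β'(1) = β(1) + (λ⁻² log λ⁻² + ∑ (k+1)² log(k+1) e^{-β(1)E_k}) /
(∑ (k+1)² √(k(k+2)) e^{-β(1)E_k})`. -/
theorem stmt18 (lam : ℝ) (hlam : 0 < lam) (β : ℝ → ℝ) (hβpos : ∀ n, 0 < β n)
    (hdiff : DifferentiableAt ℝ β 1)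
    (heq : ∀ᶠ n in nhds (1 : ℝ),
      lam ^ (2 * n) *
        ∑' k : ℕ+, (((k : ℕ) : ℝ) + 1) ^ (3 - n) * Real.exp (-(β n) * Ek k) = 1) :
    β 1 - deriv β 1 =
      β 1 +
        (lam ^ (-2 : ℝ) * Real.log (lam ^ (-2 : ℝ)) +
            ∑' k : ℕ+, (((k : ℕ) : ℝ) + 1) ^ 2 * Real.log (((k : ℕ) : ℝ) + 1) *
              Real.exp (-(β 1) * Ek k)) /
          (∑' k : ℕ+, (((k : ℕ) : ℝ) + 1) ^ 2 * Real.sqrt (((k : ℕ) : ℝ) * (((k : ℕ) : ℝ) + 2)) *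
            Real.exp (-(β 1) * Ek k)) := by
  have hb1pos : 0 < β 1 := hβpos 1
  set b1 : ℝ := β 1 with hb1
  set c : ℝ := b1 / 2 with hcdef
  have hc : 0 < c := by positivity
  set p₀ : ℝ × ℝ := ((1:ℝ), b1) with hp₀def
  set s : Set (ℝ×ℝ) := Set.Ioo (0:ℝ) 2 ×ˢ Set.Ioi c with hsdef
  have hsopen : IsOpen s := isOpen_Ioo.prod isOpen_Ioi
  have hsconn : IsPreconnected s := ((convex_Ioo (0:ℝ) 2).prod (convex_Ioi c)).isPreconnected
  have hp0 : p₀ ∈ s := by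
    refine ⟨⟨by norm_num, by norm_num⟩, ?_⟩
    simp only [Set.mem_Ioi]
    rw [hcdef]; linarith
  set u : ℕ+ → ℝ := fun k => 3 * ((((k:ℕ):ℝ)+1)^4 * Real.exp (-(c * (k:ℕ)))) with hudef
  have hu : Summable u := (summable_aux hc).mul_left 3
  have hbound : ∀ (k : ℕ+) (p : ℝ × ℝ), p ∈ s → ‖fF' k p‖ ≤ u k := by
    intro k p hp
    exact fF'_bound hc k p hp.1 hp.2
  have hfF_le_u : ∀ k : ℕ+, fF k p₀ ≤ u k := by
    intro k
    have h := fF_bound hc k p₀ hp0.1 hp0.2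
    have hk : (0:ℝ) ≤ ((k:ℕ):ℝ) := Nat.cast_nonneg _
    have h2 : ((((k:ℕ):ℝ)+1):ℝ)^(3:ℕ) ≤ 3 * (((k:ℕ):ℝ)+1)^4 := by
      have h3 : ((((k:ℕ):ℝ)+1):ℝ)^(3:ℕ) ≤ (((k:ℕ):ℝ)+1)^(4:ℕ) :=
        pow_le_pow_right₀ (by linarith) (by norm_num)
      have h4 : (0:ℝ) ≤ (((k:ℕ):ℝ)+1)^(4:ℕ) := by positivity
      linarith
    calc fF k p₀ ≤ (((k:ℕ):ℝ)+1)^(3:ℕ) * Real.exp (-(c * (k:ℕ))) := h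
      _ ≤ 3 * ((((k:ℕ):ℝ)+1)^4 * Real.exp (-(c * (k:ℕ)))) := by
          rw [← mul_assoc]
          exact mul_le_mul_of_nonneg_right h2 (Real.exp_pos _).le
  have hf0 : Summable (fun k : ℕ+ => fF k p₀) :=
    Summable.of_nonneg_of_le (fun k => (fF_pos k p₀).le) hfF_le_u hu
  -- derivative of the two-variable sum
  have hG : HasFDerivAt (fun p => ∑' k : ℕ+, fF k p) (∑' k : ℕ+, fF' k p₀) p₀ :=
    hasFDerivAt_tsum_of_isPreconnected hu hsopen hsconn
      (fun k p _ => hasFDerivAt_fF k p) hbound hp0 hf0 hp0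
  set d : ℝ := deriv β 1 with hddef
  have hβ' : HasDerivAt β d 1 := hdiff.hasDerivAt
  have hγ : HasDerivAt (fun n : ℝ => (n, β n)) ((1:ℝ), d) 1 := (hasDerivAt_id (1:ℝ)).prodMk hβ'
  have hcomp : HasDerivAt (fun n : ℝ => ∑' k : ℕ+, fF k (n, β n))
      ((∑' k : ℕ+, fF' k p₀) ((1:ℝ), d)) 1 := by
    have h := hG.comp_hasDerivAt (1:ℝ) hγ
    exact h
  have hlam2 : HasDerivAt (fun n : ℝ => lam ^ (2*n)) (lam ^ (2*(1:ℝ)) * Real.log lam * 2) 1 := by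
    have h := (Real.hasStrictDerivAt_const_rpow hlam (2*(1:ℝ))).hasDerivAt
    have h2 : HasDerivAt (fun n : ℝ => 2*n) 2 1 := by
      simpa using (hasDerivAt_id (1:ℝ)).const_mul (2:ℝ)
    have h3 := h.comp (1:ℝ) h2
    exact h3
  have hF : HasDerivAt (fun n : ℝ => lam^(2*n) * ∑' k : ℕ+, fF k (n, β n))
      (lam ^ (2*(1:ℝ)) * Real.log lam * 2 * (∑' k : ℕ+, fF k (1, β 1)) +
        lam ^ (2*(1:ℝ)) * ((∑' k : ℕ+, fF' k p₀) ((1:ℝ), d))) 1 := hlam2.mul hcomp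
  have hconst : HasDerivAt (fun n : ℝ => lam^(2*n) * ∑' k : ℕ+, fF k (n, β n)) 0 1 := by
    have h1 : HasDerivAt (fun _ : ℝ => (1:ℝ)) 0 1 := hasDerivAt_const _ _
    apply h1.congr_of_eventuallyEq
    filter_upwards [heq] with n hn
    exact hn
  have hkey : lam ^ (2*(1:ℝ)) * Real.log lam * 2 * (∑' k : ℕ+, fF k (1, β 1)) +
      lam ^ (2*(1:ℝ)) * ((∑' k : ℕ+, fF' k p₀) ((1:ℝ), d)) = 0 := hF.unique hconst
  -- evaluate the derivative CLM sum at (1, d)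
  have hTsum : Summable (fun k : ℕ+ => fF' k p₀) :=
    Summable.of_norm_bounded hu (fun k => hbound k p₀ hp0)
  have happly : (∑' k : ℕ+, fF' k p₀) ((1:ℝ), d) = ∑' k : ℕ+, fF' k p₀ ((1:ℝ), d) := by
    have h := (ContinuousLinearMap.apply ℝ ℝ ((1:ℝ), d)).map_tsum hTsum
    simpa using h
  have hcoef : ∀ (k : ℕ+) (a : ℝ), 0 ≤ a → a ≤ 3*(((k:ℕ):ℝ)+1) → a * fF k p₀ ≤ u k := by
    intro k a ha hb
    have hk : (0:ℝ) ≤ ((k:ℕ):ℝ) := Nat.cast_nonneg _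
    calc a * fF k p₀ ≤ (3*(((k:ℕ):ℝ)+1)) * fF k p₀ :=
          mul_le_mul_of_nonneg_right hb (fF_pos k p₀).le
      _ ≤ (3*(((k:ℕ):ℝ)+1)) * ((((k:ℕ):ℝ)+1)^(3:ℕ) * Real.exp (-(c * (k:ℕ)))) :=
          mul_le_mul_of_nonneg_left (fF_bound hc k p₀ hp0.1 hp0.2) (by positivity)
      _ = u k := by rw [hudef]; ring
  have hlog_nonneg : ∀ k : ℕ+, 0 ≤ Real.log (((k:ℕ):ℝ)+1) := fun k =>
    Real.log_nonneg (by
      have hk : (0:ℝ) ≤ ((k:ℕ):ℝ) := Nat.cast_nonneg _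
      linarith)
  have hlog_le : ∀ k : ℕ+, Real.log (((k:ℕ):ℝ)+1) ≤ 3*(((k:ℕ):ℝ)+1) := fun k => by
    have := log_add_Ek_le k
    have := Ek_nonneg k
    linarith
  have hEk_le3 : ∀ k : ℕ+, Ek k ≤ 3*(((k:ℕ):ℝ)+1) := fun k => by
    have := log_add_Ek_le k
    have := hlog_nonneg k
    linarith
  have hSLsum : Summable (fun k : ℕ+ => Real.log (((k:ℕ):ℝ)+1) * fF k p₀) :=
    Summable.of_nonneg_of_le
      (fun k => mul_nonneg (hlog_nonneg k) (fF_pos k p₀).le)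
      (fun k => hcoef k _ (hlog_nonneg k) (hlog_le k)) hu
  have hSEsum : Summable (fun k : ℕ+ => Ek k * fF k p₀) :=
    Summable.of_nonneg_of_le
      (fun k => mul_nonneg (Ek_nonneg k) (fF_pos k p₀).le)
      (fun k => hcoef k _ (Ek_nonneg k) (hEk_le3 k)) hu
  set SL : ℝ := ∑' k : ℕ+, Real.log (((k:ℕ):ℝ)+1) * fF k p₀ with hSLdef
  set SE : ℝ := ∑' k : ℕ+, Ek k * fF k p₀ with hSEdef
  have heval : (∑' k : ℕ+, fF' k p₀) ((1:ℝ), d) = -SL + -(d * SE) := by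
    rw [happly]
    have h1 : ∀ k : ℕ+, fF' k p₀ ((1:ℝ), d) =
        -(Real.log (((k:ℕ):ℝ)+1) * fF k p₀) + -(d * (Ek k * fF k p₀)) := by
      intro k
      rw [fF'_apply]
      ring
    rw [tsum_congr h1, Summable.tsum_add hSLsum.neg ((hSEsum.mul_left d).neg), tsum_neg, tsum_neg,
      tsum_mul_left]
  -- the value at n = 1
  have h1 : lam ^ (2*(1:ℝ)) * ∑' k : ℕ+, fF k (1, β 1) = 1 := heq.self_of_nhds
  set S0 : ℝ := ∑' k : ℕ+, fF k (1, β 1) with hS0def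
  have hS0pos : 0 < S0 :=
    Summable.tsum_pos hf0 (fun k => (fF_pos k p₀).le) 1 (fF_pos 1 p₀)
  have hP : (0:ℝ) < lam ^ (2*(1:ℝ)) := Real.rpow_pos_of_pos hlam _
  -- main scalar relation
  have hrel : d * SE = 2 * Real.log lam * S0 - SL := by
    rw [heval] at hkey
    have h2 : lam ^ (2*(1:ℝ)) * (Real.log lam * 2 * S0 - SL - d * SE) = 0 := by
      rw [← hkey]; ring
    have h3 := (mul_eq_zero.mp h2).resolve_left (ne_of_gt hP)
    linarith
  have hSEpos : 0 < SE :=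
    Summable.tsum_pos hSEsum (fun k => mul_nonneg (Ek_nonneg k) (fF_pos k p₀).le) 1
      (mul_pos (Ek_pos 1) (fF_pos 1 p₀))
  -- identify lam ^ (-2) with S0
  have hlam2eq : lam ^ (-2:ℝ) = S0 := by
    have h4 : lam ^ (2*(1:ℝ)) = lam ^ (2:ℝ) := by norm_num
    rw [h4] at h1 hP
    rw [show (-2:ℝ) = -(2:ℝ) by norm_num, Real.rpow_neg hlam.le]
    have h6 : S0 = (lam ^ (2:ℝ))⁻¹ := eq_inv_of_mul_eq_one_right (by linarith [h1])
    rw [h6]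
  have hloglam : Real.log (lam ^ (-2:ℝ)) = (-2) * Real.log lam := Real.log_rpow hlam _
  -- rewrite the goal sums
  have hfF1 : ∀ k : ℕ+, fF k p₀ = (((k:ℕ):ℝ)+1)^2 * Real.exp (-b1 * Ek k) := by
    intro k
    have h6 : (3 - p₀.1 : ℝ) = ((2:ℕ):ℝ) := by norm_num [hp₀def]
    rw [fF, h6, Real.rpow_natCast]
  have hSL' : (∑' k : ℕ+, (((k : ℕ) : ℝ) + 1) ^ 2 * Real.log (((k : ℕ) : ℝ) + 1) *
      Real.exp (-b1 * Ek k)) = SL := by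
    rw [hSLdef]
    apply tsum_congr
    intro k
    rw [hfF1 k]
    ring
  have hSE' : (∑' k : ℕ+, (((k : ℕ) : ℝ) + 1) ^ 2 *
      Real.sqrt (((k : ℕ) : ℝ) * (((k : ℕ) : ℝ) + 2)) * Real.exp (-b1 * Ek k)) = SE := by
    rw [hSEdef]
    apply tsum_congr
    intro k
    rw [hfF1 k, Ek]
    ring
  rw [hSL', hSE', hloglam, hlam2eq]
  have hfin : (S0 * (-2 * Real.log lam) + SL) / SE = -d := by
    rw [div_eq_iff (ne_of_gt hSEpos)]
    linarith [hrel]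
  rw [hfin]
  ring
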